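/- Let G = (V,E) be a graph and let G' be the graph obtained from G by adding, for each vertex v ∈ V, n² new degree-one vertices adjacent only to v, where n = |V|. Let k' = k·(n² + n). Then G has a feedback vertex set of size at most k if and only if G' has a feedback vertex set S with |N_{G'}[S]| ≤ k'. -/

import Mathlib

/-- Closed neighborhood of a vertex set. -/
def closedNbhd {V : Type*} (G : SimpleGraph V) (S : Set V) : Set V :=
  S ∪ {v | ∃ u ∈ S, G.Adj u v}

/-- `S` is a feedback vertex set of `G`: every cycle of `G` contains a vertex of `S`. -/
def IsFVS {V : Type*} (G : SimpleGraph V) (S : Set V) : Prop :=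
  ∀ (v : V) (w : G.Walk v v), w.IsCycle → ∃ x ∈ w.support, x ∈ S

/-- The graph `G'` obtained from `G` by attaching `m` new degree-one neighbors
(encoded `Sum.inr (v, i)`) to each vertex `v`. -/
def addPendants {V : Type*} (G : SimpleGraph V) (m : ℕ) :
    SimpleGraph (V ⊕ V × Fin m) :=
  SimpleGraph.fromRel (fun a b =>
    match a, b with
    | Sum.inl a, Sum.inl b => G.Adj a b
    | Sum.inl a, Sum.inr (w, _) => a = w
    | _, _ => False)

open SimpleGraph

section AuxLemmas

variable {V : Type*} {G : SimpleGraph V} {m : ℕ}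

lemma sfvs_adj_inl_inl {a b : V} :
    (addPendants G m).Adj (Sum.inl a) (Sum.inl b) ↔ G.Adj a b := by
  simp only [addPendants, fromRel_adj]
  constructor
  · rintro ⟨-, h | h⟩
    · exact h
    · exact h.symm
  · intro h
    exact ⟨by simp [h.ne], Or.inl h⟩

lemma sfvs_adj_inr {x : V ⊕ V × Fin m} {p : V × Fin m} :
    (addPendants G m).Adj x (Sum.inr p) ↔ x = Sum.inl p.1 := by
  cases x with
  | inl a =>
    simp only [addPendants, fromRel_adj]
    constructor
    · rintro ⟨-, h | h⟩
      · exact congrArg Sum.inl h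
      · exact h.elim
    · rintro h
      obtain rfl : a = p.1 := Sum.inl.inj h
      exact ⟨by simp, Or.inl rfl⟩
  | inr q =>
    simp only [addPendants, fromRel_adj]
    constructor
    · rintro ⟨-, h | h⟩ <;> exact h.elim
    · rintro h; simp at h

lemma sfvs_no_cycle_at_inr {p : V × Fin m}
    (w : (addPendants G m).Walk (Sum.inr p) (Sum.inr p)) (hw : w.IsCycle) : False := by
  cases w with
  | nil => exact hw.ne_nil rfl
  | @cons _ z _ h q =>
    obtain ⟨x, r, h', heq⟩ := Walk.exists_cons_eq_concat h q
    have hx : x = Sum.inl p.1 := sfvs_adj_inr.mp h'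
    subst hx
    cases r with
    | @cons _ y _ h₀ r₀ =>
      have hy : y = Sum.inl p.1 := sfvs_adj_inr.mp (h₀.symm)
      subst hy
      cases r₀ with
      | nil =>
        have h3 := hw.three_le_length
        rw [heq] at h3
        simp [Walk.length_concat] at h3
      | @cons _ y' _ h₁ r₁ =>
        have hnd := hw.support_nodup
        rw [heq] at hnd
        simp only [Walk.support_concat, Walk.support_cons, List.concat_eq_append,
          List.tail_cons] at hnd
        have hmem : Sum.inl p.1 ∈ r₁.support := r₁.end_mem_support
        simp [List.nodup_cons, hmem] at hnd

lemma sfvs_lift_walk {x y : V ⊕ V × Fin m} (w : (addPendants G m).Walk x y) :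
    ∀ a b : V, x = Sum.inl a → y = Sum.inl b →
      (∀ z ∈ w.support, ∃ c, z = Sum.inl c) →
      ∃ p : G.Walk a b, p.support.map Sum.inl = w.support ∧
        p.edges.map (Sym2.map Sum.inl) = w.edges := by
  induction w with
  | nil =>
    intro a b hx hy hall
    obtain rfl : a = b := Sum.inl.inj (hx ▸ hy)
    subst hx
    exact ⟨Walk.nil, by simp, by simp⟩
  | @cons x' z y' h q ih =>
    intro a b hx hy hall
    subst hx
    obtain ⟨c, hz⟩ := hall z (by simp)
    subst hz
    have hadj : G.Adj a c := sfvs_adj_inl_inl.mp h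
    obtain ⟨p, hs, he⟩ := ih c b rfl hy (fun z hz => hall z (by simp [hz]))
    exact ⟨Walk.cons hadj p, by simp [hs], by simp [he]⟩

/-- The embedding of `G` into `addPendants G m` as a graph homomorphism. -/
def sfvsInlHom (G : SimpleGraph V) (m : ℕ) : G →g addPendants G m :=
  ⟨Sum.inl, fun h => sfvs_adj_inl_inl.mpr h⟩

lemma sfvs_isFVS_image {S : Set V} (hS : IsFVS G S) :
    IsFVS (addPendants G m) (Sum.inl '' S) := by
  classical
  intro x w hw
  have hall : ∀ z ∈ w.support, ∃ c, z = Sum.inl c := by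
    intro z hz
    cases z with
    | inl c => exact ⟨c, rfl⟩
    | inr p => exact absurd (hw.rotate hz) (fun h => sfvs_no_cycle_at_inr _ h)
  obtain ⟨a, rfl⟩ := hall x w.start_mem_support
  obtain ⟨p, hs, he⟩ := sfvs_lift_walk w a a rfl rfl hall
  have hlen : p.length = w.length := by
    have h1 : p.support.length = w.support.length := by rw [← hs, List.length_map]
    simpa [Walk.length_support] using h1
  have hcyc : p.IsCycle := by
    refine ⟨⟨⟨?_⟩, ?_⟩, ?_⟩
    · exact List.Nodup.of_map _ (he ▸ hw.edges_nodup)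
    · intro hnil
      have h3 := hw.three_le_length
      rw [hnil] at hlen
      simp at hlen
      omega
    · have hnd := hw.support_nodup
      rw [← hs, ← List.map_tail] at hnd
      exact hnd.of_map _
  obtain ⟨u, hu, huS⟩ := hS a p hcyc
  exact ⟨Sum.inl u, by rw [← hs]; exact List.mem_map_of_mem hu, ⟨u, huS, rfl⟩⟩

lemma sfvs_isFVS_preimage {S' : Set (V ⊕ V × Fin m)}
    (hS' : IsFVS (addPendants G m) S') : IsFVS G (Sum.inl ⁻¹' S') := by
  intro v p hp
  have hw : ((p.map (sfvsInlHom G m)).IsCycle) :=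
    hp.map (f := sfvsInlHom G m) Sum.inl_injective
  obtain ⟨x, hx, hxS⟩ := hS' _ _ hw
  rw [Walk.support_map] at hx
  obtain ⟨u, hu, rfl⟩ := List.mem_map.mp hx
  exact ⟨u, hu, hxS⟩

open Set in
lemma sfvs_ncard_biUnion_le {α β : Type*} [Finite β] {S : Set α} (hS : S.Finite)
    (T : α → Set β) {c : ℕ} :
    (∀ v ∈ S, (T v).ncard ≤ c) → (⋃ v ∈ S, T v).ncard ≤ S.ncard * c := by
  refine Set.Finite.induction_on (motive := fun S _ => (∀ v ∈ S, (T v).ncard ≤ c) →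
      (⋃ v ∈ S, T v).ncard ≤ S.ncard * c) S hS (by simp) ?_
  intro a s ha hfin ih h
  rw [Set.biUnion_insert]
  calc (T a ∪ ⋃ v ∈ s, T v).ncard ≤ (T a).ncard + (⋃ v ∈ s, T v).ncard :=
        Set.ncard_union_le _ _
    _ ≤ c + s.ncard * c :=
        add_le_add (h a (Set.mem_insert _ _)) (ih fun v hv => h v (Set.mem_insert_of_mem _ hv))
    _ = (s.ncard + 1) * c := by ring
    _ = (insert a s).ncard * c := by rw [Set.ncard_insert_of_notMem ha hfin]

open Set in
lemma sfvs_le_ncard_biUnion {α β : Type*} [Finite β] {S : Set α} (hS : S.Finite)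
    (T : α → Set β) {c : ℕ} :
    (∀ v ∈ S, ∀ w ∈ S, v ≠ w → Disjoint (T v) (T w)) → (∀ v ∈ S, c ≤ (T v).ncard) →
    S.ncard * c ≤ (⋃ v ∈ S, T v).ncard := by
  refine Set.Finite.induction_on
      (motive := fun S _ => (∀ v ∈ S, ∀ w ∈ S, v ≠ w → Disjoint (T v) (T w)) →
        (∀ v ∈ S, c ≤ (T v).ncard) → S.ncard * c ≤ (⋃ v ∈ S, T v).ncard)
      S hS (by simp) ?_
  intro a s ha hfin ih hdisj h
  rw [Set.biUnion_insert]
  have hd : Disjoint (T a) (⋃ v ∈ s, T v) := by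
    simp only [Set.disjoint_iUnion_right]
    intro v hv
    exact hdisj a (Set.mem_insert _ _) v (Set.mem_insert_of_mem _ hv)
      (fun he => ha (he ▸ hv))
  rw [Set.ncard_union_eq hd (Set.toFinite _) (Set.toFinite _),
    Set.ncard_insert_of_notMem ha hfin]
  have h1 := h a (Set.mem_insert _ _)
  have h2 := ih (fun v hv w hw => hdisj v (Set.mem_insert_of_mem _ hv) w
      (Set.mem_insert_of_mem _ hw)) (fun v hv => h v (Set.mem_insert_of_mem _ hv))
  calc (s.ncard + 1) * c = c + s.ncard * c := by ring
    _ ≤ (T a).ncard + (⋃ v ∈ s, T v).ncard := add_le_add h1 h2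

lemma sfvs_ncard_inr_image {α β : Type*} [Fintype β] (v : α) :
    (Sum.inr '' ({v} ×ˢ (Set.univ : Set β)) : Set (α ⊕ α × β)).ncard = Fintype.card β := by
  have h : (Sum.inr '' ({v} ×ˢ (Set.univ : Set β)) : Set (α ⊕ α × β)) =
      (fun i : β => Sum.inr (v, i)) '' Set.univ := by
    ext x
    constructor
    · rintro ⟨⟨v', i⟩, ⟨hv, -⟩, rfl⟩
      obtain rfl : v' = v := hv
      exact ⟨i, trivial, rfl⟩
    · rintro ⟨i, -, rfl⟩
      exact ⟨(v, i), ⟨rfl, trivial⟩, rfl⟩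
  rw [h, Set.ncard_image_of_injective _ (fun i j hij => by
    simpa using hij), Set.ncard_univ, Nat.card_eq_fintype_card]

lemma sfvs_closedNbhd_image_bound [Fintype V] (S : Set V) :
    (closedNbhd (addPendants G m) (Sum.inl '' S)).ncard ≤ S.ncard * (Fintype.card V + m) := by
  classical
  set T : V → Set (V ⊕ V × Fin m) := fun v =>
    Sum.inl '' (insert v (G.neighborSet v)) ∪ Sum.inr '' ({v} ×ˢ (Set.univ : Set (Fin m)))
    with hT
  have hsub : closedNbhd (addPendants G m) (Sum.inl '' S) ⊆ ⋃ v ∈ S, T v := by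
    intro x hx
    rcases hx with ⟨v, hv, rfl⟩ | ⟨u, ⟨v, hv, rfl⟩, hadj⟩
    · exact Set.mem_biUnion hv (Or.inl ⟨v, Set.mem_insert _ _, rfl⟩)
    · cases x with
      | inl b =>
        exact Set.mem_biUnion hv
          (Or.inl ⟨b, Set.mem_insert_of_mem _ (sfvs_adj_inl_inl.mp hadj), rfl⟩)
      | inr p =>
        have hv1 : v = p.1 := Sum.inl.inj (sfvs_adj_inr.mp hadj)
        exact Set.mem_biUnion hv (Or.inr ⟨p, ⟨hv1.symm, trivial⟩, rfl⟩)
  have hbound : ∀ v ∈ S, (T v).ncard ≤ Fintype.card V + m := by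
    intro v _
    refine le_trans (Set.ncard_union_le _ _) (add_le_add ?_ ?_)
    · rw [Set.ncard_image_of_injective _ Sum.inl_injective]
      have hle := Set.ncard_le_ncard (Set.subset_univ (insert v (G.neighborSet v)))
        (Set.toFinite _)
      rwa [Set.ncard_univ, Nat.card_eq_fintype_card] at hle
    · exact le_of_eq (by rw [sfvs_ncard_inr_image]; simp)
  calc (closedNbhd (addPendants G m) (Sum.inl '' S)).ncard
      ≤ (⋃ v ∈ S, T v).ncard := Set.ncard_le_ncard hsub (Set.toFinite _)
    _ ≤ S.ncard * (Fintype.card V + m) :=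
        sfvs_ncard_biUnion_le (Set.toFinite S) T hbound

lemma sfvs_le_closedNbhd_ncard [Fintype V] (S' : Set (V ⊕ V × Fin m)) :
    (Sum.inl ⁻¹' S').ncard * (m + 1) ≤ (closedNbhd (addPendants G m) S').ncard := by
  classical
  set P : V → Set (V ⊕ V × Fin m) := fun v =>
    insert (Sum.inl v) (Sum.inr '' ({v} ×ˢ (Set.univ : Set (Fin m)))) with hP
  have hsub : (⋃ v ∈ Sum.inl ⁻¹' S', P v) ⊆ closedNbhd (addPendants G m) S' := by
    intro x hx
    obtain ⟨v, hv, hxP⟩ := Set.mem_iUnion₂.mp hx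
    rcases hxP with rfl | ⟨p, ⟨hp1, -⟩, rfl⟩
    · exact Set.mem_union_left _ hv
    · refine Set.mem_union_right _ ⟨Sum.inl v, hv, ?_⟩
      exact sfvs_adj_inr.mpr (congrArg Sum.inl (Set.mem_singleton_iff.mp hp1).symm)
  have hdisj : ∀ v ∈ Sum.inl ⁻¹' S', ∀ w ∈ Sum.inl ⁻¹' S', v ≠ w → Disjoint (P v) (P w) := by
    intro v _ w _ hvw
    rw [Set.disjoint_left]
    rintro x (rfl | ⟨p, ⟨hp1, -⟩, rfl⟩) hxw
    · rcases hxw with h | ⟨q, ⟨hq1, -⟩, h⟩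
      · exact hvw (Sum.inl.inj h)
      · simp at h
    · rcases hxw with h | ⟨q, ⟨hq1, -⟩, h⟩
      · simp at h
      · obtain rfl : q = p := Sum.inr.inj h
        exact hvw (by rw [← Set.mem_singleton_iff.mp hp1, ← Set.mem_singleton_iff.mp hq1])
  have hcard : ∀ v ∈ Sum.inl ⁻¹' S', m + 1 ≤ (P v).ncard := by
    intro v _
    have hnm : (Sum.inl v : V ⊕ V × Fin m) ∉
        Sum.inr '' ({v} ×ˢ (Set.univ : Set (Fin m))) := by
      rintro ⟨p, -, h⟩
      simp at h
    rw [hP]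
    refine le_of_eq ?_
    rw [Set.ncard_insert_of_notMem hnm (Set.toFinite _), sfvs_ncard_inr_image]
    simp
  calc (Sum.inl ⁻¹' S').ncard * (m + 1)
      ≤ (⋃ v ∈ Sum.inl ⁻¹' S', P v).ncard :=
        sfvs_le_ncard_biUnion (Set.toFinite _) P hdisj hcard
    _ ≤ (closedNbhd (addPendants G m) S').ncard := Set.ncard_le_ncard hsub (Set.toFinite _)

end AuxLemmas

theorem secluded_fvs_np_hardness_reduction {V : Type*} [Fintype V]
    (G : SimpleGraph V) (k : ℕ) :
    (∃ S : Set V, IsFVS G S ∧ S.ncard ≤ k) ↔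
      (∃ S' : Set (V ⊕ V × Fin ((Fintype.card V) ^ 2)),
        IsFVS (addPendants G ((Fintype.card V) ^ 2)) S' ∧
        (closedNbhd (addPendants G ((Fintype.card V) ^ 2)) S').ncard ≤
          k * ((Fintype.card V) ^ 2 + Fintype.card V)) := by
  classical
  constructor
  · rintro ⟨S, hFVS, hk⟩
    refine ⟨Sum.inl '' S, sfvs_isFVS_image hFVS, ?_⟩
    calc (closedNbhd (addPendants G ((Fintype.card V) ^ 2)) (Sum.inl '' S)).ncard
        ≤ S.ncard * (Fintype.card V + (Fintype.card V) ^ 2) := sfvs_closedNbhd_image_bound S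
      _ ≤ k * (Fintype.card V + (Fintype.card V) ^ 2) := Nat.mul_le_mul_right _ hk
      _ = k * ((Fintype.card V) ^ 2 + Fintype.card V) := by ring
  · rintro ⟨S', hFVS', hk⟩
    refine ⟨Sum.inl ⁻¹' S', sfvs_isFVS_preimage hFVS', ?_⟩
    by_cases hkn : Fintype.card V ≤ k
    · have hle := Set.ncard_le_ncard (Set.subset_univ (Sum.inl ⁻¹' S')) (Set.toFinite _)
      rw [Set.ncard_univ, Nat.card_eq_fintype_card] at hle
      omega
    · by_contra hgt
      push_neg at hgt hkn
      have h1 := sfvs_le_closedNbhd_ncard (G := G) (m := (Fintype.card V) ^ 2) S'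
      have h2 : (k + 1) * ((Fintype.card V) ^ 2 + 1) ≤
          (Sum.inl ⁻¹' S').ncard * ((Fintype.card V) ^ 2 + 1) :=
        Nat.mul_le_mul_right _ hgt
      have h3 := le_trans h2 (le_trans h1 hk)
      have h4 : (k + 1) * Fintype.card V ≤ Fintype.card V * Fintype.card V :=
        Nat.mul_le_mul_right _ hkn
      nlinarith [h3, h4]
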